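/- Let A_S be the Artin-Tits group of type E_8 with generators σ_1,…,σ_8, and let X = {s_1,…,s_7} (a standard parabolic subset of type E_7). Then the elements g = σ_1σ_3σ_4σ_5σ_6 and h = σ_2σ_4σ_5σ_6σ_7 are conjugate in A_S but are not conjugate in the standard parabolic subgroup A_X generated by {σ_1,…,σ_7}. In particular, A_X is not conjugacy stable in A_S. -/

import Mathlib

set_option maxRecDepth 100000


namespace ArtinTits

variable {B : Type*}

/-- The alternating product `a b a b ⋯` with `m` factors, starting with `a`. -/
def altProd {G : Type*} [Monoid G] (a b : G) : ℕ → G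
  | 0 => 1
  | n + 1 => a * altProd b a n

/-- The braid relations defining the Artin–Tits group of a Coxeter matrix:
`Π(σ_s, σ_t; m_{s,t}) = Π(σ_t, σ_s; m_{s,t})` whenever `m_{s,t} ≠ ∞` (here `∞` is coded by `0`). -/
def artinRelationsSet (M : CoxeterMatrix B) : Set (FreeGroup B) :=
  {r | ∃ s t : B, M s t ≠ 0 ∧
    r = altProd (FreeGroup.of s) (FreeGroup.of t) (M s t) *
        (altProd (FreeGroup.of t) (FreeGroup.of s) (M s t))⁻¹}

/-- The Artin–Tits group of a Coxeter matrix. -/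
abbrev ArtinGroup (M : CoxeterMatrix B) : Type _ := PresentedGroup (artinRelationsSet M)

/-- The standard generator `σ_s` of the Artin–Tits group. -/
def σ (M : CoxeterMatrix B) (s : B) : ArtinGroup M := PresentedGroup.of s

/-- The standard parabolic subgroup `A_X` of the Artin–Tits group. -/
def AP (M : CoxeterMatrix B) (X : Set B) : Subgroup (ArtinGroup M) :=
  Subgroup.closure (σ M '' X)

/-- The standard parabolic subgroup `W_X` of the Coxeter group. -/
def WP (M : CoxeterMatrix B) (X : Set B) : Subgroup M.Group :=
  Subgroup.closure (M.simple '' X)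

/-- A subgroup `H ≤ G` is conjugacy stable if any two elements of `H` which are conjugate
in `G` are already conjugate by an element of `H`. -/
def IsConjugacyStable {G : Type*} [Group G] (H : Subgroup G) : Prop :=
  ∀ a b : G, a ∈ H → b ∈ H → (∃ g : G, g⁻¹ * a * g = b) → ∃ h ∈ H, h⁻¹ * a * h = b

/-- Property `⋆_W` for the pair `(W_X, W_S)`. -/
def StarW (M : CoxeterMatrix B) (X : Set B) : Prop :=
  ∀ Y₁ Y₂ : Set B, Y₁ ⊆ X → Y₂ ⊆ X → ∀ w : M.Group,
    (fun x => w⁻¹ * x * w) '' (M.simple '' Y₁) = M.simple '' Y₂ →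
    ∃ v ∈ WP M X, ∀ y ∈ Y₁, v⁻¹ * M.simple y * v = w⁻¹ * M.simple y * w

/-- Property `⋆_A` for the pair `(A_X, A_S)`. -/
def StarA (M : CoxeterMatrix B) (X : Set B) : Prop :=
  ∀ Y₁ Y₂ : Set B, Y₁ ⊆ X → Y₂ ⊆ X → ∀ g : ArtinGroup M,
    (fun x => g⁻¹ * x * g) '' (σ M '' Y₁) = σ M '' Y₂ →
    ∃ h ∈ AP M X, ∀ y ∈ Y₁, h⁻¹ * σ M y * h = g⁻¹ * σ M y * g

/-- Adjacency in the Coxeter graph: `s` and `t` are joined by an edge iff `m_{s,t} ≥ 3`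
(where the value `0` codes `∞`, which also gives an edge). -/
def Adj (M : CoxeterMatrix B) (s t : B) : Prop := s ≠ t ∧ M s t ≠ 2

/-- `s` and `t` are connected by a path of the Coxeter graph staying inside `X`. -/
def ReachIn (M : CoxeterMatrix B) (X : Set B) (s t : B) : Prop :=
  Relation.ReflTransGen (fun a b => a ∈ X ∧ b ∈ X ∧ Adj M a b) s t

/-- The Coxeter graph induced on `X` is connected. -/
def ConnectedIn (M : CoxeterMatrix B) (X : Set B) : Prop :=
  ∀ s ∈ X, ∀ t ∈ X, ReachIn M X s t

/-- The Coxeter matrix `M` restricted to `X` is of the type of the Coxeter matrix `M'`,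
i.e. there is a bijection transporting one to the other. -/
def IsOfType {B' : Type*} (M : CoxeterMatrix B) (X : Set B) (M' : CoxeterMatrix B') : Prop :=
  ∃ e : X ≃ B', ∀ a b : X, M a.val b.val = M' (e a) (e b)

/-- The Coxeter matrix of type `Bₙ` with the paper's labelling: vertices `0, …, n-1`
(representing `s_1, …, s_n`), `m_{s_1, s_2} = 4` and `m_{s_i, s_{i+1}} = 3` for `i ≥ 2`. -/
def Bmat (n : ℕ) : CoxeterMatrix (Fin n) where
  M := Matrix.of fun i j : Fin n ↦
    if i = j then 1
      else (if (i.val = 0 ∧ j.val = 1) ∨ (j.val = 0 ∧ i.val = 1) then 4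
        else (if (j : ℕ) + 1 = i ∨ (i : ℕ) + 1 = j then 3 else 2))
  isSymm := by unfold Matrix.IsSymm; aesop
  diagonal := by simp
  off_diagonal := by aesop

/-- The Coxeter matrix of type `Dₙ` with the paper's labelling: vertices `0, …, n-1`
(representing `s_1, …, s_n`), with edges `{s_1, s_3}`, `{s_2, s_3}` and `{s_i, s_{i+1}}`
for `i ≥ 3`, all labelled `3`. -/
def Dmat (n : ℕ) : CoxeterMatrix (Fin n) where
  M := Matrix.of fun i j : Fin n ↦
    if i = j then 1
      else (if (i.val = 0 ∧ j.val = 2) ∨ (j.val = 0 ∧ i.val = 2) then 3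
        else (if i.val = 0 ∨ j.val = 0 then 2
          else (if (j : ℕ) + 1 = i ∨ (i : ℕ) + 1 = j then 3 else 2)))
  isSymm := by unfold Matrix.IsSymm; aesop
  diagonal := by simp
  off_diagonal := by aesop

end ArtinTits

namespace ArtinTits

open CoxeterMatrix

section AuxE8

lemma map_altProd {G H : Type*} [Monoid G] [Monoid H] (f : G →* H) (a b : G) :
    ∀ n, f (altProd a b n) = altProd (f a) (f b) n
  | 0 => by simp [altProd]
  | n + 1 => by rw [altProd, map_mul, map_altProd f b a n]; rfl

lemma rel_eq {s t : Fin 8} (hst : (E₈ s t : ℕ) ≠ 0) :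
    altProd (σ E₈ s) (σ E₈ t) (E₈ s t) = altProd (σ E₈ t) (σ E₈ s) (E₈ s t) := by
  have hr : altProd (FreeGroup.of s) (FreeGroup.of t) (E₈ s t) *
      (altProd (FreeGroup.of t) (FreeGroup.of s) (E₈ s t))⁻¹ ∈ artinRelationsSet E₈ :=
    ⟨s, t, hst, rfl⟩
  have h1 : PresentedGroup.mk (artinRelationsSet E₈)
      (altProd (FreeGroup.of s) (FreeGroup.of t) (E₈ s t) *
      (altProd (FreeGroup.of t) (FreeGroup.of s) (E₈ s t))⁻¹) = 1 :=
    (QuotientGroup.eq_one_iff _).mpr (Subgroup.subset_normalClosure hr)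
  rw [map_mul, map_inv, mul_inv_eq_one, map_altProd, map_altProd] at h1
  exact h1

lemma braid_rel {s t : Fin 8} (h : (E₈ s t : ℕ) = 3) :
    σ E₈ s * σ E₈ t * σ E₈ s = σ E₈ t * σ E₈ s * σ E₈ t := by
  have h0 := rel_eq (s := s) (t := t) (by rw [h]; norm_num)
  rw [h] at h0
  simpa [altProd, mul_assoc] using h0

lemma comm_rel {s t : Fin 8} (h : (E₈ s t : ℕ) = 2) :
    σ E₈ s * σ E₈ t = σ E₈ t * σ E₈ s := by
  have h0 := rel_eq (s := s) (t := t) (by rw [h]; norm_num)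
  rw [h] at h0
  simpa [altProd, mul_assoc] using h0

/-- Evaluation of a word in the generators. -/
def wp (l : List (Fin 8)) : ArtinGroup E₈ := (l.map (σ E₈)).prod

lemma wp_nil : wp [] = 1 := rfl

lemma wp_cons (a : Fin 8) (l : List (Fin 8)) : wp (a :: l) = σ E₈ a * wp l := by
  simp [wp]

lemma wp_append (l₁ l₂ : List (Fin 8)) : wp (l₁ ++ l₂) = wp l₁ * wp l₂ := by
  simp [wp]

/-- One elementary rewriting step at the head of a word:
`false` is a commutation move, `true` is a braid move. -/
def mstep : Bool → List (Fin 8) → Option (List (Fin 8))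
  | false, a :: b :: l => if (E₈ a b : ℕ) = 2 then some (b :: a :: l) else none
  | true, a :: b :: c :: l =>
      if c = a ∧ (E₈ a b : ℕ) = 3 then some (b :: a :: b :: l) else none
  | _, _ => none

/-- Apply an elementary step at position `n`. -/
def applyAt : ℕ → Bool → List (Fin 8) → Option (List (Fin 8))
  | 0, t, l => mstep t l
  | n + 1, t, a :: l => (applyAt n t l).map (a :: ·)
  | _ + 1, _, [] => none

/-- Run a list of moves. -/
def runMoves : List (ℕ × Bool) → List (Fin 8) → Option (List (Fin 8))
  | [], l => some l
  | mv :: ms, l =>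
      match applyAt mv.1 mv.2 l with
      | some l2 => runMoves ms l2
      | none => none

lemma mstep_sound (t : Bool) (l l' : List (Fin 8)) (h : mstep t l = some l') :
    wp l = wp l' := by
  cases t with
  | false =>
    match l with
    | [] => simp [mstep] at h
    | [a] => simp [mstep] at h
    | a :: b :: m =>
      rw [mstep] at h
      split at h
      · rename_i hc
        cases h
        rw [wp_cons, wp_cons, wp_cons, wp_cons, ← mul_assoc, ← mul_assoc, comm_rel hc]
      · cases h
  | true =>
    match l with
    | [] => simp [mstep] at h
    | [a] => simp [mstep] at h
    | [a, b] => simp [mstep] at h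
    | a :: b :: c :: m =>
      rw [mstep] at h
      split at h
      · rename_i hc
        obtain ⟨rfl, hb⟩ := hc
        cases h
        rw [wp_cons, wp_cons, wp_cons, wp_cons, wp_cons, wp_cons]
        rw [← mul_assoc, ← mul_assoc, ← mul_assoc, ← mul_assoc, braid_rel hb]
      · cases h

lemma applyAt_sound : ∀ (n : ℕ) (t : Bool) (l l' : List (Fin 8)),
    applyAt n t l = some l' → wp l = wp l'
  | 0, t, l, l', h => mstep_sound t l l' h
  | n + 1, t, [], l', h => by simp [applyAt] at h
  | n + 1, t, a :: l, l', h => by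
    rw [applyAt] at h
    cases hm : applyAt n t l with
    | none => rw [hm] at h; simp at h
    | some l2 =>
      rw [hm] at h
      simp only [Option.map_some] at h
      cases h
      rw [wp_cons, wp_cons, applyAt_sound n t l l2 hm]

lemma runMoves_sound : ∀ (ms : List (ℕ × Bool)) (l l' : List (Fin 8)),
    runMoves ms l = some l' → wp l = wp l'
  | [], l, l', h => by cases h; rfl
  | mv :: ms, l, l', h => by
    rw [runMoves] at h
    cases hm : applyAt mv.1 mv.2 l with
    | none => rw [hm] at h; cases h
    | some l2 =>
      rw [hm] at h
      rw [applyAt_sound mv.1 mv.2 l l2 hm, runMoves_sound ms l2 l' h]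

def gw : List (Fin 8) := [0, 2, 3, 4, 5]
def hw : List (Fin 8) := [1, 3, 4, 5, 6]

def cw : List (Fin 8) := [0, 2, 0, 3, 2, 0, 4, 3, 2, 0, 5, 4, 3, 2, 0, 6, 5, 4, 3, 2, 0, 7, 6, 5, 4, 3, 2, 0, 1, 3, 1, 4, 3, 1, 5, 4, 3, 1, 6, 5, 4, 3, 1, 7, 6, 5, 4, 3, 1]

def mvs : List (Nat × Bool) := [(4, false), (3, false), (2, false), (5, false), (4, false), (6, false), (5, false), (7, false), (8, false), (9, false), (19, false), (18, false), (17, false), (16, false), (20, false), (19, false), (18, false), (21, false), (20, false), (22, false), (23, true), (21, true), (19, true), (17, true), (15, true), (17, false), (19, false), (18, false), (21, false), (20, false), (19, false), (23, false), (22, false), (21, false), (20, false), (25, false), (24, false), (23, false), (22, false), (26, false), (25, false), (24, false), (27, false), (26, false), (28, false), (29, true), (27, true), (25, true), (23, true), (21, true), (23, false), (25, false), (24, false), (27, false), (26, false), (25, false), (29, false), (28, false), (27, false), (26, false), (31, false), (30, false), (29, false), (28, false), (27, false), (32, true), (31, false), (30, false), (29, false), (28, false), (35, false), (34, false), (32,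 true), (31, false), (30, false), (29, false), (36, true), (34, true), (33, false), (32, false), (31, false), (30, false), (38, false), (37, false), (36, false), (35, false), (33, true), (32, false), (31, false), (39, true), (38, false), (37, false), (35, true), (34, false), (33, false), (32, false), (41, false), (39, true), (37, true), (36, false), (35, false), (34, false), (33, false), (42, false), (41, false), (40, false), (39, false), (38, false), (37, false), (35, true), (34, false), (43, true), (42, false), (41, false), (40, false), (39, false), (37, true), (36, false), (35, false), (45, false), (43, true), (42, false), (41, false), (39, true), (38, false), (37, false), (36, false), (46, false), (45, false), (43, true), (41, true), (40, false), (39, false), (38, false), (37, false), (47, false), (46, false), (45, false), (44, false), (43, false), (42, false), (41, false), (40, false), (38, true), (48, true), (47, false), (46, false), (45, false), (44, false), (43, false), (42, false), (40, true), (39, false), (50, false), (48, true), (47, false), (46, false), (45, false), (44, false), (42, true), (41, false), (40, false), (51, false), (50, false), (48, true), (47, false), (46, false), (44, true), (43, false), (42, false), (41, false), (52, false), (51, false), (50, false), (48, true), (46, true), (45, false), (44, false), (43, false), (42, false)]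

set_option maxHeartbeats 4000000 in
lemma conj_key : wp (gw ++ cw) = wp (cw ++ hw) :=
  runMoves_sound mvs _ _ (by decide)

end AuxE8


section AuxRep

def pN : Fin 8 → Nat := ![17811086288549257872207299157403034533723739546280764828682001677153534286628065634967163423395026852692312577442062654435035425568696123134288604217212652239790143575191582608911244010525829775314067667913995813263045045555234854627615977362325430730072010377238378111688777698459732733348978950601059975397956892794832172045615449290888318128820890401237623285987187003471153438785970496451360743066219133310792660699638380628776389129371390204254976665608568650516185805142188265676928432761661346314878343881647206581683144351854535525564067689817131035212968960627201,
  17811086288549073410942658878860158531710589317158249223208404158460764832486823724085147728071287634896148516382772200254156602807065055405303419163878136380858067467534105200482229700320131721174857761816005556351178349058443925154395385757396987209852599464524754730507044603909001798881619292210439222981830486116678520157807614123346350193297297344293424859873562687279083319500423742334209597440516546342113131680104594924654064194043774165705208083243624153005172435909380052487431100830240265914111021093271794239693428828610754712159577826861449953620115880563440,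
  17811086288549167774264443061222461707147640965041548337985092763682812905217162546043838902920593292580079273769183388131384033295936174479092759616651642500819688207322557692119053892963086224171237883698237950068140822959746408506962144339248030943031956070967847669470286981583444123881909425684863612868913012696435360651144501245346275185688228418038815235350282021833232938915542774910971811909618815996520290498428764585559238761728782062973879775729662481784547554382113233910349955801402988217474066356133920895615209917311817771328384882927400915123368960570080,
  17811086288526985039354867972075314322883954648493623419434979766870582819502355106203938555977968033587604820667995112384603150258746115432196008721790094311666379758773296707901249479872916648130661303959695340295747472067632150933669695020944633377279870089090941027746735564814624794018318985149608613934482446260460712004955645513897783832963568830476512123975908386032741175602871656537168479872966010088271088092396235951787792499061767570578508017030383324248179546754084954671448773293131038004620501970848760172582923158273559749110063137582444654233973746861040,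
  17811086283203128275946579262945896634930640064119810618881326316472078917734745493563655332657164127004295749177093636109931064994101203301944805240633838698644851540989474933724163075681799071951973992360326415814202320508055732821050960977123626404111927561166790427058326766670316166587423390130826623161588363459033105917083109052112246787885922869791388842939247637418115248654208963793971413346506478948150460602856482226622693104664381780411775826508894480455394360173084120552143760421247503695661717696108960560359737080730964544874906737848066139978262296691440,
  17811085005477505056352662958078084572020448523415034032293064719662243188083429150923006032823804486950490054280419853794377962871504239345652272550522976987677310715320478069228561406043737860636046891865401437739930085457606002735104529477540006062469925359072870812794149003644400279726940638148104929048551001334930512503197539519883617177369414260141270562092534332461782149629788193370867225955168472822010042670662682285027083369874070679430937951452205003877145971294812195902197724919604647576829319384584578915000129507189161255100292773642127359529769615987440,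
  17810778351327932353806063847662324611265667529967359037636998861649603756188130735984045181873564929280533425033179239728594416175040607608482548686730430207801282336233892241576380701428576326903151883505129351210901999469852228941354027163052732133002543290113059065334228245224665675754502798926547527429130760383320530625875706521911623930982612561346860399234927914353577663834049762501833704685687210185855889257982445189808051296334481046403897131304273033484362562680038306211980732929024303548788240242466414832135352064898208324285655769051875264845126247027440,
  17737181355430483742622249489582426649145343015919046935985888137941955180485604356245539293773690089047911719473086003603771440246893822109169647124742609629024789263570225562289227964233212236373825369612778474311448215719377623102119169244331891989185319640427925457145476029902631929856962456905772905427336119254775653641548868444610125967603728530419673205142014799155384281750140544814336396359163876444927533685428965521139389931690740504047677653876053755195831367420887958362050879408573561875466737781208839917304400124654892694239976243396543226095526058863498]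


/-- The permutation action of the Coxeter group `W(E₈)` on the 240 roots,
with the 126 roots of the parabolic `E₇` listed first. -/
def pf (i : Fin 8) : Function.End (Fin 240) :=
  fun x => ⟨(pN i / 240 ^ x.val) % 240, Nat.mod_lt _ (by norm_num)⟩

set_option maxHeartbeats 2000000 in
lemma pf_sq : ∀ i : Fin 8, ∀ x : Fin 240, pf i (pf i x) = x := by decide

/-- The reflections as invertible elements. -/
def pu (i : Fin 8) : (Function.End (Fin 240))ˣ :=
  ⟨pf i, pf i, funext fun x => pf_sq i x, funext fun x => pf_sq i x⟩

set_option maxHeartbeats 4000000 in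
lemma pf_rel : ∀ s t : Fin 8, ∀ x : Fin 240,
    altProd (pf s) (pf t) (E₈ s t) x = altProd (pf t) (pf s) (E₈ s t) x := by
  letI : ∀ s t : Fin 8, ∀ x : Fin 240, Decidable (altProd (pf s) (pf t) (E₈ s t) x = altProd (pf t) (pf s) (E₈ s t) x) :=
    fun s t x => instDecidableEqFin _ _ _
  decide

lemma pu_rel : ∀ s t : Fin 8,
    altProd (pu s) (pu t) (E₈ s t) = altProd (pu t) (pu s) (E₈ s t) := by
  intro s t
  apply Units.ext
  have h1 := map_altProd (Units.coeHom (Function.End (Fin 240))) (pu s) (pu t) (E₈ s t)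
  have h2 := map_altProd (Units.coeHom (Function.End (Fin 240))) (pu t) (pu s) (E₈ s t)
  simp only [Units.coeHom_apply] at h1 h2
  rw [h1, h2]
  funext x
  exact pf_rel s t x

/-- The homomorphism from the Artin group of type `E₈` to the group of permutations
of the `240` roots, factoring through the Coxeter group `W(E₈)`. -/
def phi : ArtinGroup E₈ →* (Function.End (Fin 240))ˣ :=
  PresentedGroup.toGroup (f := pu) (by
    rintro r ⟨s, t, hst, rfl⟩
    rw [map_mul, map_inv, mul_inv_eq_one, map_altProd, map_altProd]
    simp only [FreeGroup.lift_apply_of]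
    exact pu_rel s t)

lemma pu_val (i : Fin 8) : ((pu i : (Function.End (Fin 240))ˣ) : Function.End (Fin 240)) = pf i := rfl

lemma phi_of (s : Fin 8) : phi (σ E₈ s) = pu s :=
  PresentedGroup.toGroup.of _

/-- The set of indices of the `E₇`-roots. -/
def Ωf : Finset (Fin 240) := Finset.univ.filter (fun i => i.val < 126)

set_option maxHeartbeats 2000000 in
lemma gen_stab : ∀ i : Fin 8, i ≠ 7 → ∀ x : Fin 240, x.val < 126 → (pf i x).val < 126 := by
  decide

/-- The subgroup of permutations preserving the set of `E₇`-roots. -/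
def P : Subgroup (Function.End (Fin 240))ˣ where
  carrier := {u | ∀ x ∈ Ωf, (u : Function.End (Fin 240)) x ∈ Ωf}
  one_mem' := by
    intro x hx
    exact hx
  mul_mem' := by
    intro a b ha hb x hx
    exact ha _ (hb _ hx)
  inv_mem' := by
    intro u hu x hx
    have hcan : ∀ y : Fin 240, ((u⁻¹ : _ˣ) : Function.End (Fin 240))
        ((u : Function.End (Fin 240)) y) = y := by
      intro y
      have h1 : ((u⁻¹ : _ˣ) : Function.End (Fin 240)) * (u : Function.End (Fin 240)) = 1 :=
        Units.inv_mul u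
      exact congrFun h1 y
    have hinj : Function.Injective (fun y : Fin 240 => (u : Function.End (Fin 240)) y) := by
      intro a b hab
      have := congrArg ((u⁻¹ : _ˣ) : Function.End (Fin 240)) hab
      rwa [hcan, hcan] at this
    have himg : Ωf.image (fun y => (u : Function.End (Fin 240)) y) = Ωf := by
      apply Finset.eq_of_subset_of_card_le
      · intro z hz
        obtain ⟨y, hy, rfl⟩ := Finset.mem_image.mp hz
        exact hu y hy
      · rw [Finset.card_image_of_injective _ hinj]
    rw [← himg] at hx
    obtain ⟨y, hy, hyx⟩ := Finset.mem_image.mp hx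
    have : ((u⁻¹ : _ˣ) : Function.End (Fin 240)) x = y := by rw [← hyx]; exact hcan y
    show ((u⁻¹ : _ˣ) : Function.End (Fin 240)) x ∈ Ωf
    rw [this]
    exact hy

lemma AP_le_comap : AP E₈ ({0, 1, 2, 3, 4, 5, 6} : Set (Fin 8)) ≤ P.comap phi := by
  apply (Subgroup.closure_le _).mpr
  rintro x ⟨i, hi, rfl⟩
  simp only [Subgroup.mem_comap, SetLike.mem_coe]
  rw [phi_of]
  have hi7 : i ≠ 7 := by
    simp only [Set.mem_insert_iff, Set.mem_singleton_iff] at hi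
    rcases hi with rfl | rfl | rfl | rfl | rfl | rfl | rfl <;> decide
  intro v hv
  simp only [Ωf, Finset.mem_filter, Finset.mem_univ, true_and] at hv ⊢
  exact gen_stab i hi7 v hv

/-- Number of fixed `E₇`-roots of a permutation. -/
def fixc (A : Function.End (Fin 240)) : ℕ :=
  (@Finset.filter _ (fun x => A x = x) (fun x => instDecidableEqFin _ (A x) x) Ωf).card

lemma fix_conj (u w : (Function.End (Fin 240))ˣ) (hu : u ∈ P) :
    fixc ((u⁻¹ * w * u : _ˣ) : Function.End (Fin 240)) =
    fixc ((w : Function.End (Fin 240))) := by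
  have hcan : ∀ y : Fin 240, ((u⁻¹ : _ˣ) : Function.End (Fin 240))
      ((u : Function.End (Fin 240)) y) = y :=
    fun y => congrFun (Units.inv_mul u) y
  have hcan2 : ∀ y : Fin 240, (u : Function.End (Fin 240))
      (((u⁻¹ : _ˣ) : Function.End (Fin 240)) y) = y :=
    fun y => congrFun (Units.mul_inv u) y
  unfold fixc
  apply Finset.card_bij (fun v _ => (u : Function.End (Fin 240)) v)
  · intro v hv
    simp only [Finset.mem_filter] at hv ⊢
    obtain ⟨hvΩ, hfix⟩ := hv
    refine ⟨hu v hvΩ, ?_⟩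
    have h1 : (w : Function.End (Fin 240)) ((u : Function.End (Fin 240)) v) =
        (u : Function.End (Fin 240)) (((u⁻¹ * w * u : _ˣ) : Function.End (Fin 240)) v) := by
      show ((w * u : _ˣ) : Function.End (Fin 240)) v =
        ((u * (u⁻¹ * w * u) : _ˣ) : Function.End (Fin 240)) v
      rw [show w * u = u * (u⁻¹ * w * u) by group]
    rw [h1, hfix]
  · intro a _ b _ hab
    have := congrArg ((u⁻¹ : _ˣ) : Function.End (Fin 240)) hab
    rwa [hcan, hcan] at this
  · intro v hv
    simp only [Finset.mem_filter] at hv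
    obtain ⟨hvΩ, hfix⟩ := hv
    refine ⟨((u⁻¹ : _ˣ) : Function.End (Fin 240)) v,
      Finset.mem_filter.mpr ⟨P.inv_mem hu v hvΩ, ?_⟩, hcan2 v⟩
    have h1 : ((u⁻¹ * w * u : _ˣ) : Function.End (Fin 240))
        (((u⁻¹ : _ˣ) : Function.End (Fin 240)) v) =
        ((u⁻¹ * w * u * u⁻¹ : _ˣ) : Function.End (Fin 240)) v := rfl
    rw [h1, show u⁻¹ * w * u * u⁻¹ = u⁻¹ * w by group]
    show ((u⁻¹ : _ˣ) : Function.End (Fin 240)) ((w : Function.End (Fin 240)) v) = _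
    rw [hfix]

set_option maxHeartbeats 2000000 in
lemma fix_ne :
    fixc ((pf 1 : Function.End (Fin 240)) * pf 3 * pf 4 * pf 5 * pf 6) ≠
    fixc ((pf 0 : Function.End (Fin 240)) * pf 2 * pf 3 * pf 4 * pf 5) := by decide

end AuxRep


/-- Counterexample (c) of the paper: in the Artin–Tits group of type `E₈` (vertices `0,…,7`
standing for `s_1,…,s_8`), the elements `g = σ_1 σ_3 σ_4 σ_5 σ_6` and `h = σ_2 σ_4 σ_5 σ_6 σ_7`
of the standard parabolic subgroup of type `E₇` on `{s_1,…,s_7}` are conjugate in `A_S` but not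
in `A_X`; in particular `A_X` is not conjugacy stable in `A_S`. -/
theorem E8_E7_not_conjugacy_stable :
    (∃ c : ArtinGroup E₈,
        c⁻¹ * (σ E₈ 0 * σ E₈ 2 * σ E₈ 3 * σ E₈ 4 * σ E₈ 5) * c =
          σ E₈ 1 * σ E₈ 3 * σ E₈ 4 * σ E₈ 5 * σ E₈ 6) ∧
    (¬ ∃ c ∈ AP E₈ ({0, 1, 2, 3, 4, 5, 6} : Set (Fin 8)),
        c⁻¹ * (σ E₈ 0 * σ E₈ 2 * σ E₈ 3 * σ E₈ 4 * σ E₈ 5) * c =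
          σ E₈ 1 * σ E₈ 3 * σ E₈ 4 * σ E₈ 5 * σ E₈ 6) ∧
    ¬ IsConjugacyStable (AP E₈ ({0, 1, 2, 3, 4, 5, 6} : Set (Fin 8))) := by
  have hgw : wp gw = σ E₈ 0 * σ E₈ 2 * σ E₈ 3 * σ E₈ 4 * σ E₈ 5 := by
    simp [wp, gw, mul_assoc]
  have hhw : wp hw = σ E₈ 1 * σ E₈ 3 * σ E₈ 4 * σ E₈ 5 * σ E₈ 6 := by
    simp [wp, hw, mul_assoc]
  have key := conj_key
  rw [wp_append, wp_append, hgw, hhw] at key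
  have part1 : ∃ c : ArtinGroup E₈,
      c⁻¹ * (σ E₈ 0 * σ E₈ 2 * σ E₈ 3 * σ E₈ 4 * σ E₈ 5) * c =
        σ E₈ 1 * σ E₈ 3 * σ E₈ 4 * σ E₈ 5 * σ E₈ 6 :=
    ⟨wp cw, by rw [mul_assoc, key, inv_mul_cancel_left]⟩
  have part2 : ¬ ∃ c ∈ AP E₈ ({0, 1, 2, 3, 4, 5, 6} : Set (Fin 8)),
      c⁻¹ * (σ E₈ 0 * σ E₈ 2 * σ E₈ 3 * σ E₈ 4 * σ E₈ 5) * c =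
        σ E₈ 1 * σ E₈ 3 * σ E₈ 4 * σ E₈ 5 * σ E₈ 6 := by
    rintro ⟨c, hc, hcon⟩
    have hφc : phi c ∈ P := AP_le_comap hc
    have h2 := congrArg phi hcon
    simp only [map_mul, map_inv, phi_of] at h2
    have h3 := fix_conj (phi c) (pu 0 * pu 2 * pu 3 * pu 4 * pu 5) hφc
    rw [h2] at h3
    exact fix_ne (by simpa only [Units.val_mul, pu_val] using h3)
  refine ⟨part1, part2, ?_⟩
  intro hstab
  have hmem : ∀ i : Fin 8, i ∈ ({0, 1, 2, 3, 4, 5, 6} : Set (Fin 8)) →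
      σ E₈ i ∈ AP E₈ ({0, 1, 2, 3, 4, 5, 6} : Set (Fin 8)) :=
    fun i hi => Subgroup.subset_closure ⟨i, hi, rfl⟩
  have hg : σ E₈ 0 * σ E₈ 2 * σ E₈ 3 * σ E₈ 4 * σ E₈ 5 ∈
      AP E₈ ({0, 1, 2, 3, 4, 5, 6} : Set (Fin 8)) := by
    refine mul_mem (mul_mem (mul_mem (mul_mem (hmem 0 ?_) (hmem 2 ?_)) (hmem 3 ?_)) (hmem 4 ?_)) (hmem 5 ?_) <;>
      · simp only [Set.mem_insert_iff, Set.mem_singleton_iff]; decide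
  have hh : σ E₈ 1 * σ E₈ 3 * σ E₈ 4 * σ E₈ 5 * σ E₈ 6 ∈
      AP E₈ ({0, 1, 2, 3, 4, 5, 6} : Set (Fin 8)) := by
    refine mul_mem (mul_mem (mul_mem (mul_mem (hmem 1 ?_) (hmem 3 ?_)) (hmem 4 ?_)) (hmem 5 ?_)) (hmem 6 ?_) <;>
      · simp only [Set.mem_insert_iff, Set.mem_singleton_iff]; decide
  exact part2 (hstab _ _ hg hh part1)

end ArtinTits
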